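/- Let Ω be a σ-complete AM-space and φ a norm-one functional in the dual. If φ(x)·φ(y) = 0 for all x, y ∈ Ω with x ∧ y = 0, then ‖φ⁺‖·‖φ⁻‖ = 0, i.e., φ is either positive or negative. -/

import Mathlib

theorem AM_space_disjoint_support_functional
    {Ω : Type*} [NormedAddCommGroup Ω] [Lattice Ω] [HasSolidNorm Ω] [IsOrderedAddMonoid Ω] [NormedSpace ℝ Ω]
    (hAM : ∀ x y : Ω, 0 ≤ x → 0 ≤ y → ‖x ⊔ y‖ = max ‖x‖ ‖y‖)
    (hσ : ∀ f : ℕ → Ω, (∃ b : Ω, ∀ n, f n ≤ b) → ∃ s : Ω, IsLUB (Set.range f) s)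
    (φ φp φn : Ω →L[ℝ] ℝ)
    (hdecomp : φ = φp - φn)
    (hφp : ∀ z : Ω, 0 ≤ z → 0 ≤ φp z)
    (hφn : ∀ z : Ω, 0 ≤ z → 0 ≤ φn z)
    (hnorms : ‖φ‖ = ‖φp‖ + ‖φn‖)
    (hφ1 : ‖φ‖ = 1)
    (hdisj : ∀ x y : Ω, x ⊓ y = 0 → φ x * φ y = 0) :
    ‖φp‖ * ‖φn‖ = 0 := by
  by_contra hc
  have ha0 : 0 < ‖φp‖ :=
    lt_of_le_of_ne (norm_nonneg _) (by intro h; exact hc (by rw [← h]; ring))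
  have hb0 : 0 < ‖φn‖ :=
    lt_of_le_of_ne (norm_nonneg _) (by intro h; exact hc (by rw [← h]; ring))
  have hab : ‖φp‖ + ‖φn‖ = 1 := by rw [← hnorms, hφ1]
  set ε := min ‖φp‖ ‖φn‖ / 2 with hε
  have hmin : 0 < min ‖φp‖ ‖φn‖ := lt_min ha0 hb0
  have hεa : ε < ‖φp‖ := by have := min_le_left ‖φp‖ ‖φn‖; simp only [hε]; linarith
  have hεb : ε < ‖φn‖ := by have := min_le_right ‖φp‖ ‖φn‖; simp only [hε]; linarith
  -- find z with ‖z‖ ≤ 1 and φ z > 1 - ε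
  have hlt : (1 : ℝ) - ε < ‖φ‖ := by rw [hφ1]; linarith
  obtain ⟨x, hx1, hx2⟩ := φ.exists_lt_apply_of_lt_opNorm hlt
  have key : ∃ z : Ω, ‖z‖ ≤ 1 ∧ 1 - ε < φ z := by
    rcases le_or_gt 0 (φ x) with h | h
    · exact ⟨x, hx1.le, by rwa [Real.norm_eq_abs, abs_of_nonneg h] at hx2⟩
    · refine ⟨-x, by simpa using hx1.le, ?_⟩
      rw [Real.norm_eq_abs, abs_of_neg h] at hx2
      simpa using hx2
  obtain ⟨z, hz1, hz2⟩ := key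
  have hzp : ‖z⁺‖ ≤ 1 :=
    le_trans (norm_le_norm_of_abs_le_abs (by
      rw [abs_of_nonneg (posPart_nonneg z)]; rw [posPart_def]; exact sup_le (le_abs_self z) (abs_nonneg z))) hz1
  have hzn : ‖z⁻‖ ≤ 1 :=
    le_trans (norm_le_norm_of_abs_le_abs (by
      rw [abs_of_nonneg (negPart_nonneg z)]; rw [negPart_def]; exact sup_le (neg_le_abs z) (abs_nonneg z))) hz1
  have hsplit : φ z = φ z⁺ - φ z⁻ := by
    rw [← map_sub, posPart_sub_negPart]
  have hφzp : φ z⁺ ≤ ‖φp‖ := by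
    have h1 : φ z⁺ = φp z⁺ - φn z⁺ := by rw [hdecomp]; simp
    have h2 : φp z⁺ ≤ ‖φp‖ * ‖z⁺‖ := le_trans (le_abs_self _)
      (by rw [← Real.norm_eq_abs]; exact φp.le_opNorm z⁺)
    have h3 : ‖φp‖ * ‖z⁺‖ ≤ ‖φp‖ := by
      calc ‖φp‖ * ‖z⁺‖ ≤ ‖φp‖ * 1 := by
            exact mul_le_mul_of_nonneg_left hzp (norm_nonneg _)
        _ = ‖φp‖ := mul_one _
    have h4 := hφn z⁺ (posPart_nonneg z)
    linarith
  have hφzn : -φ z⁻ ≤ ‖φn‖ := by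
    have h1 : φ z⁻ = φp z⁻ - φn z⁻ := by rw [hdecomp]; simp
    have h2 : φn z⁻ ≤ ‖φn‖ * ‖z⁻‖ := le_trans (le_abs_self _)
      (by rw [← Real.norm_eq_abs]; exact φn.le_opNorm z⁻)
    have h3 : ‖φn‖ * ‖z⁻‖ ≤ ‖φn‖ := by
      calc ‖φn‖ * ‖z⁻‖ ≤ ‖φn‖ * 1 := by
            exact mul_le_mul_of_nonneg_left hzn (norm_nonneg _)
        _ = ‖φn‖ := mul_one _
    have h4 := hφp z⁻ (negPart_nonneg z)
    linarith
  have hd := hdisj z⁺ z⁻ (posPart_inf_negPart_eq_zero z)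
  rcases mul_eq_zero.mp hd with h | h
  · rw [h] at hsplit; linarith
  · rw [h] at hsplit; linarith
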